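/- Let H be a complex separable Hilbert space, K a bounded linear operator on H with closed range R(K) and Moore–Penrose pseudo-inverse K†, and let (f_k)_{k∈I} and (g_k)_{k∈I} be Bessel sequences in H with synthesis operators T_F and T_G. Then for every x ∈ R(K), ‖x − Σ_{k∈I} ⟨g_k, K†x⟩ f_k‖ ≤ ‖K − T_F T_G*‖ · ‖K†‖ · ‖x‖. In particular, if ‖K†‖ = 1 and (g_k) is an approximate K-dual of (f_k) (i.e. ‖K − T_F T_G*‖ < 1), then ‖x − T_F T_G* K† x‖ < ‖x‖ for every nonzero x ∈ R(K). -/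

import Mathlib

open ContinuousLinearMap

theorem aux_adjoint_apply
    {H : Type*} [NormedAddCommGroup H] [InnerProductSpace ℂ H] [CompleteSpace H]
    {I : Type*} [DecidableEq I]
    (g : I → H) (TG : lp (fun _ : I => ℂ) 2 →L[ℂ] H)
    (hTG : ∀ k, TG (lp.single 2 k 1) = g k) (y : H) (k : I) :
    (adjoint TG y) k = inner ℂ (g k) y := by
  have h := ContinuousLinearMap.adjoint_inner_right TG (lp.single 2 k 1) y
  rw [hTG, lp.inner_single_left] at h
  simpa using h

theorem aux_TF_tsum
    {H : Type*} [NormedAddCommGroup H] [InnerProductSpace ℂ H] [CompleteSpace H]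
    {I : Type*} [DecidableEq I]
    (f : I → H) (TF : lp (fun _ : I => ℂ) 2 →L[ℂ] H)
    (hTF : ∀ k, TF (lp.single 2 k 1) = f k) (v : lp (fun _ : I => ℂ) 2) :
    TF v = ∑' k, (v k : ℂ) • f k := by
  have h : HasSum (fun k : I => lp.single 2 k (v k)) v :=
    lp.hasSum_single (by norm_num) v
  have h2 : HasSum (fun k : I => TF (lp.single 2 k (v k))) (TF v) :=
    TF.hasSum h
  have h3 : (fun k : I => TF (lp.single 2 k (v k))) = fun k => (v k : ℂ) • f k := by
    funext k
    have : lp.single 2 k (v k) = (v k : ℂ) • (lp.single 2 k (1 : ℂ) : lp (fun _ : I => ℂ) 2) := by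
      have h4 := lp.single_smul (E := fun _ : I => ℂ) 2 k (v k) (1 : ℂ)
      rw [smul_eq_mul, mul_one] at h4
      exact h4
    rw [this, map_smul, hTF]
  rw [h3] at h2
  exact h2.tsum_eq.symm

/-- for `K` with closed range and Moore–Penrose pseudo-inverse `K†`, and
Bessel sequences `(f k)`, `(g k)` with synthesis operators `T_F`, `T_G`, one has
`‖x − ∑ₖ ⟨g k, K† x⟩ • f k‖ ≤ ‖K − T_F T_G*‖ ‖K†‖ ‖x‖` for `x ∈ R(K)`; in particular if
`‖K†‖ = 1` and `(g k)` is an approximate `K`-dual of `(f k)` then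
`‖x − T_F T_G* K† x‖ < ‖x‖` for every nonzero `x ∈ R(K)`. -/
theorem approximate_K_dual_estimate
    {H : Type*} [NormedAddCommGroup H] [InnerProductSpace ℂ H]
    [CompleteSpace H] [TopologicalSpace.SeparableSpace H]
    {I : Type*} [Countable I] [DecidableEq I]
    (K Kd : H →L[ℂ] H) (f g : I → H)
    (TF TG : lp (fun _ : I => ℂ) 2 →L[ℂ] H)
    (hTF : ∀ k, TF (lp.single 2 k 1) = f k)
    (hTG : ∀ k, TG (lp.single 2 k 1) = g k)
    (hK : IsClosed (Set.range ⇑K))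
    (hKd1 : K.comp (Kd.comp K) = K)
    (hKd2 : Kd.comp (K.comp Kd) = Kd)
    (hKd3 : adjoint (K.comp Kd) = K.comp Kd)
    (hKd4 : adjoint (Kd.comp K) = Kd.comp K)
    (hf : ∃ B : ℝ, 0 < B ∧ ∀ x : H, Summable (fun k => ‖(inner ℂ (f k) x : ℂ)‖ ^ 2) ∧
      ∑' k, ‖(inner ℂ (f k) x : ℂ)‖ ^ 2 ≤ B * ‖x‖ ^ 2)
    (hg : ∃ D : ℝ, 0 < D ∧ ∀ x : H, Summable (fun k => ‖(inner ℂ (g k) x : ℂ)‖ ^ 2) ∧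
      ∑' k, ‖(inner ℂ (g k) x : ℂ)‖ ^ 2 ≤ D * ‖x‖ ^ 2) :
    (∀ x ∈ Set.range ⇑K,
        ‖x - ∑' k, (inner ℂ (g k) (Kd x) : ℂ) • f k‖ ≤
          ‖K - TF.comp (adjoint TG)‖ * ‖Kd‖ * ‖x‖) ∧
    (‖Kd‖ = 1 → ‖K - TF.comp (adjoint TG)‖ < 1 →
      ∀ x ∈ Set.range ⇑K, x ≠ 0 → ‖x - TF ((adjoint TG) (Kd x))‖ < ‖x‖) := by
  -- key identities
  have hfix : ∀ x ∈ Set.range ⇑K, K (Kd x) = x := by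
    rintro _ ⟨y, rfl⟩
    have := ContinuousLinearMap.ext_iff.mp hKd1 y
    simpa using this
  have hts : ∀ x : H, (∑' k, (inner ℂ (g k) (Kd x) : ℂ) • f k) = TF ((adjoint TG) (Kd x)) := by
    intro x
    rw [aux_TF_tsum f TF hTF ((adjoint TG) (Kd x))]
    congr 1
    funext k
    rw [aux_adjoint_apply g TG hTG (Kd x) k]
  have hbound : ∀ x ∈ Set.range ⇑K,
      ‖x - TF ((adjoint TG) (Kd x))‖ ≤ ‖K - TF.comp (adjoint TG)‖ * ‖Kd‖ * ‖x‖ := by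
    intro x hx
    have h1 : x - TF ((adjoint TG) (Kd x)) = (K - TF.comp (adjoint TG)) (Kd x) := by
      simp [hfix x hx]
    rw [h1]
    calc ‖(K - TF.comp (adjoint TG)) (Kd x)‖
        ≤ ‖K - TF.comp (adjoint TG)‖ * ‖Kd x‖ := le_opNorm _ _
      _ ≤ ‖K - TF.comp (adjoint TG)‖ * (‖Kd‖ * ‖x‖) := by
          exact mul_le_mul_of_nonneg_left (le_opNorm _ _) (norm_nonneg _)
      _ = ‖K - TF.comp (adjoint TG)‖ * ‖Kd‖ * ‖x‖ := by ring
  constructor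
  · intro x hx
    rw [hts x]
    exact hbound x hx
  · intro hKdnorm hlt x hx hx0
    calc ‖x - TF ((adjoint TG) (Kd x))‖
        ≤ ‖K - TF.comp (adjoint TG)‖ * ‖Kd‖ * ‖x‖ := hbound x hx
      _ < 1 * 1 * ‖x‖ := by
          rw [hKdnorm]
          have : 0 < ‖x‖ := norm_pos_iff.mpr hx0
          nlinarith [norm_nonneg (K - TF.comp (adjoint TG))]
      _ = ‖x‖ := by ring
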